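/- Let r = 2s be even, G = C_{n₁} ⊕ ⋯ ⊕ C_{n_r} with 2 ≤ n_r ∣ ⋯ ∣ n₁, and let p be a prime divisor of n_r. With standard generators e₁,…,e_s (orders n₁,…,n_s) and f₁,…,f_s (orders n_{s+1},…,n_{2s}), define g₁ = e₁ − (n_{s+1}/p)f₁, g_{2i} = eᵢ + f_{i+1} and g_{2i+1} = f_{i+1} + e_{i+1} for i = 1,…,s−1, g_r = e_s, g_{r+1} = f₁. Then every atom m of B(g₁,…,g_{r+1}) with |supp(m)| < r+1 has all coordinates divisible by p. -/

import Mathlib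

open Finset

/-- Membership in the block monoid `B(g₁,…,g_k)`. -/
def IsBlock {G : Type*} [AddCommGroup G] {k : ℕ} (g : Fin k → G)
    (m : Fin k → ℕ) : Prop :=
  ∑ i, (m i) • g i = 0

/-- The length `|m| = ∑ᵢ mᵢ`. -/
def blockLen {k : ℕ} (m : Fin k → ℕ) : ℕ := ∑ i, m i

/-- `m` is an atom of the block monoid: nonzero, and not the sum of two
nonzero elements of the monoid. -/
def IsBlockAtom {G : Type*} [AddCommGroup G] {k : ℕ} (g : Fin k → G)
    (m : Fin k → ℕ) : Prop :=
  IsBlock g m ∧ m ≠ 0 ∧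
    ∀ a b : Fin k → ℕ, IsBlock g a → IsBlock g b → m = a + b → a = 0 ∨ b = 0

/-- `m` is a group atom: it belongs to the block monoid and cannot be
written as an integral linear combination of elements of the block monoid
of length strictly smaller than `|m|`. -/
def IsGroupAtom {G : Type*} [AddCommGroup G] {k : ℕ} (g : Fin k → G)
    (m : Fin k → ℕ) : Prop :=
  IsBlock g m ∧
    ¬ ∃ (T : Finset (Fin k → ℕ)) (c : (Fin k → ℕ) → ℤ),
        (∀ b ∈ T, IsBlock g b ∧ blockLen b < blockLen m) ∧
        (∀ i, (m i : ℤ) = ∑ b ∈ T, c b * (b i))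

/-- The even-rank zigzag elements `g₁,…,g_{2s+1}` (0-indexed) in
`G = C_{n₁} ⊕ ⋯ ⊕ C_{n_{2s}}`: `g₁ = e₁ - (n_{s+1}/p)·f₁`,
`g_{2i} = eᵢ + f_{i+1}` and `g_{2i+1} = f_{i+1} + e_{i+1}` for
`i = 1,…,s-1`, `g_{2s} = e_s`, `g_{2s+1} = f₁`.  Coordinates `0,…,s-1`
correspond to `e₁,…,e_s` and coordinates `s,…,2s-1` to `f₁,…,f_s`. -/
def zigzagEven (s p : ℕ) (hs : 1 ≤ s) (n : Fin (2*s) → ℕ) :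
    Fin (2*s+1) → ∀ c : Fin (2*s), ZMod (n c) :=
  fun t => fun c =>
    if t.val ≤ 2*s-1 ∧ c.val = t.val / 2 then 1
    else if 1 ≤ t.val ∧ t.val ≤ 2*s-2 ∧ c.val = s + (t.val + 1) / 2 then 1
    else if t.val = 0 ∧ c.val = s then
      -((n ⟨s, by omega⟩ / p : ℕ) : ZMod (n c))
    else if t.val = 2*s ∧ c.val = s then 1
    else 0
lemma sum_eq_pair' {M : Type*} [AddCommMonoid M] {k : ℕ} (F : Fin k → M) (a b : Fin k)
    (hab : a ≠ b) (h0 : ∀ t, t ≠ a → t ≠ b → F t = 0) :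
    ∑ t, F t = F a + F b := by
  rw [← Finset.sum_pair hab]
  refine (Finset.sum_subset (Finset.subset_univ _) ?_).symm
  intro t _ ht
  simp only [Finset.mem_insert, Finset.mem_singleton, not_or] at ht
  exact h0 t ht.1 ht.2

lemma zig_apply (s p : ℕ) (hs : 1 ≤ s) (n : Fin (2*s) → ℕ) (t : ℕ) (ht : t < 2*s+1)
    (c : ℕ) (hc : c < 2*s) :
    zigzagEven s p hs n ⟨t, ht⟩ ⟨c, hc⟩ =
      (if t ≤ 2*s-1 ∧ c = t / 2 then 1
       else if 1 ≤ t ∧ t ≤ 2*s-2 ∧ c = s + (t + 1) / 2 then 1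
       else if t = 0 ∧ c = s then -((n ⟨s, by omega⟩ / p : ℕ) : ZMod (n ⟨c, hc⟩))
       else if t = 2*s ∧ c = s then 1 else 0) := rfl

lemma zz_hE (s p : ℕ) (hs : 1 ≤ s) (n : Fin (2*s) → ℕ) (m : Fin (2*s+1) → ℕ)
    (hcoord : ∀ c : Fin (2*s),
      ∑ t : Fin (2*s+1), (m t : ZMod (n c)) * zigzagEven s p hs n t c = 0)
    (c : ℕ) (hc : c < s) (hc2 : c < 2*s) (ha : 2*c < 2*s+1) (hb' : 2*c+1 < 2*s+1) :
    n ⟨c, hc2⟩ ∣ m ⟨2*c, ha⟩ + m ⟨2*c+1, hb'⟩ := by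
  have key := (hcoord ⟨c, hc2⟩).symm.trans
    (sum_eq_pair' (fun t => (m t : ZMod (n ⟨c, hc2⟩)) * zigzagEven s p hs n t ⟨c, hc2⟩)
      ⟨2*c, ha⟩ ⟨2*c+1, hb'⟩
      (by simp only [ne_eq, Fin.mk.injEq]; omega)
      (by
        rintro ⟨tv, htv⟩ hne1 hne2
        simp only [ne_eq, Fin.mk.injEq] at hne1 hne2
        rw [zig_apply, if_neg (by omega), if_neg (by omega), if_neg (by omega),
          if_neg (by omega), mul_zero]))
  have v0 : zigzagEven s p hs n ⟨2*c, ha⟩ ⟨c, hc2⟩ = 1 := by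
    rw [zig_apply, if_pos ⟨by omega, by omega⟩]
  have v1 : zigzagEven s p hs n ⟨2*c+1, hb'⟩ ⟨c, hc2⟩ = 1 := by
    rw [zig_apply, if_pos ⟨by omega, by omega⟩]
  rw [v0, v1, mul_one, mul_one] at key
  have key2 : ((m ⟨2*c, ha⟩ + m ⟨2*c+1, hb'⟩ : ℕ) : ZMod (n ⟨c, hc2⟩)) = 0 := by
    push_cast
    exact key.symm
  exact (CharP.cast_eq_zero_iff (ZMod (n ⟨c, hc2⟩)) (n ⟨c, hc2⟩) _).mp key2

lemma zz_hF (s p : ℕ) (hs : 1 ≤ s) (n : Fin (2*s) → ℕ) (m : Fin (2*s+1) → ℕ)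
    (hcoord : ∀ c : Fin (2*s),
      ∑ t : Fin (2*s+1), (m t : ZMod (n c)) * zigzagEven s p hs n t c = 0)
    (j : ℕ) (hj1 : 1 ≤ j) (hj : j < s) (hc2 : s+j < 2*s) (ha : 2*j-1 < 2*s+1)
    (hb' : 2*j < 2*s+1) :
    n ⟨s+j, hc2⟩ ∣ m ⟨2*j-1, ha⟩ + m ⟨2*j, hb'⟩ := by
  have key := (hcoord ⟨s+j, hc2⟩).symm.trans
    (sum_eq_pair' (fun t => (m t : ZMod (n ⟨s+j, hc2⟩)) * zigzagEven s p hs n t ⟨s+j, hc2⟩)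
      ⟨2*j-1, ha⟩ ⟨2*j, hb'⟩
      (by simp only [ne_eq, Fin.mk.injEq]; omega)
      (by
        rintro ⟨tv, htv⟩ hne1 hne2
        simp only [ne_eq, Fin.mk.injEq] at hne1 hne2
        rw [zig_apply, if_neg (by omega), if_neg (by omega), if_neg (by omega),
          if_neg (by omega), mul_zero]))
  have v0 : zigzagEven s p hs n ⟨2*j-1, ha⟩ ⟨s+j, hc2⟩ = 1 := by
    rw [zig_apply, if_neg (by omega), if_pos ⟨by omega, by omega, by omega⟩]
  have v1 : zigzagEven s p hs n ⟨2*j, hb'⟩ ⟨s+j, hc2⟩ = 1 := by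
    rw [zig_apply, if_neg (by omega), if_pos ⟨by omega, by omega, by omega⟩]
  rw [v0, v1, mul_one, mul_one] at key
  have key2 : ((m ⟨2*j-1, ha⟩ + m ⟨2*j, hb'⟩ : ℕ) : ZMod (n ⟨s+j, hc2⟩)) = 0 := by
    push_cast
    exact key.symm
  exact (CharP.cast_eq_zero_iff (ZMod (n ⟨s+j, hc2⟩)) (n ⟨s+j, hc2⟩) _).mp key2

lemma zz_hS (s p : ℕ) (hs : 1 ≤ s) (n : Fin (2*s) → ℕ) (m : Fin (2*s+1) → ℕ)
    (hcoord : ∀ c : Fin (2*s),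
      ∑ t : Fin (2*s+1), (m t : ZMod (n c)) * zigzagEven s p hs n t c = 0)
    (hs2 : s < 2*s) (h02 : (0:ℕ) < 2*s+1) (h2s2 : 2*s < 2*s+1)
    (q : ℕ) (hq : n ⟨s, hs2⟩ / p = q) :
    (n ⟨s, hs2⟩ : ℤ) ∣ (m ⟨2*s, h2s2⟩ : ℤ) - (m ⟨0, h02⟩ : ℤ) * q := by
  have key := (hcoord ⟨s, hs2⟩).symm.trans
    (sum_eq_pair' (fun t => (m t : ZMod (n ⟨s, hs2⟩)) * zigzagEven s p hs n t ⟨s, hs2⟩)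
      ⟨0, h02⟩ ⟨2*s, h2s2⟩
      (by simp only [ne_eq, Fin.mk.injEq]; omega)
      (by
        rintro ⟨tv, htv⟩ hne1 hne2
        simp only [ne_eq, Fin.mk.injEq] at hne1 hne2
        rw [zig_apply, if_neg (by omega), if_neg (by omega), if_neg (by omega),
          if_neg (by omega), mul_zero]))
  have v0 : zigzagEven s p hs n ⟨0, h02⟩ ⟨s, hs2⟩
      = -((q : ℕ) : ZMod (n ⟨s, hs2⟩)) := by
    rw [zig_apply, if_neg (by omega), if_neg (by omega), if_pos ⟨rfl, rfl⟩]
    exact congrArg (fun x : ℕ => -((x : ZMod (n ⟨s, hs2⟩)))) hq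
  have v1 : zigzagEven s p hs n ⟨2*s, h2s2⟩ ⟨s, hs2⟩ = 1 := by
    rw [zig_apply, if_neg (by omega), if_neg (by omega), if_neg (by omega),
      if_pos ⟨rfl, rfl⟩]
  rw [v0, v1, mul_one] at key
  rw [← CharP.intCast_eq_zero_iff (ZMod (n ⟨s, hs2⟩)) (n ⟨s, hs2⟩)]
  push_cast
  rw [sub_eq_zero]
  rw [mul_neg] at key
  linear_combination -key

set_option maxHeartbeats 1000000 in
theorem zigzagEven_atom_coords_div (s p : ℕ) (hs : 1 ≤ s)
    (n : Fin (2*s) → ℕ)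
    (hdvd : ∀ i j : Fin (2*s), i ≤ j → n j ∣ n i)
    (h2 : 2 ≤ n ⟨2*s-1, by omega⟩)
    (hp : p.Prime) (hpn : p ∣ n ⟨2*s-1, by omega⟩)
    (m : Fin (2*s+1) → ℕ) (hm : IsBlockAtom (zigzagEven s p hs n) m)
    (hsupp : (Finset.univ.filter (fun i => m i ≠ 0)).card < 2*s+1) :
    ∀ i, p ∣ m i := by
  have hb : ∑ i, (m i) • zigzagEven s p hs n i = 0 := hm.1
  have hcoord : ∀ c : Fin (2*s),
      ∑ t : Fin (2*s+1), (m t : ZMod (n c)) * zigzagEven s p hs n t c = 0 := by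
    intro c
    have h := congrFun hb c
    simpa [Finset.sum_apply, Pi.smul_apply, nsmul_eq_mul] using h
  have hs2 : s < 2*s := by omega
  have h02 : (0:ℕ) < 2*s+1 := by omega
  have h2s2 : 2*s < 2*s+1 := by omega
  have h0s : (0:ℕ) < 2*s := by omega
  -- p divides every n c
  have pdvd : ∀ c : Fin (2*s), p ∣ n c := by
    intro c
    refine hpn.trans (hdvd c ⟨2*s-1, by omega⟩ ?_)
    rw [Fin.le_def]
    exact (show c.val ≤ 2*s-1 by omega)
  have hpN : p ∣ n ⟨s, hs2⟩ := pdvd _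
  obtain ⟨q, hqN⟩ := hpN
  have hq : n ⟨s, hs2⟩ / p = q := by
    rw [hqN, Nat.mul_div_cancel_left _ hp.pos]
  have hS := zz_hS s p hs n m hcoord hs2 h02 h2s2 q hq
  have hd0 : n ⟨s, hs2⟩ ∣ n ⟨0, h0s⟩ :=
    hdvd ⟨0, h0s⟩ ⟨s, hs2⟩ (by rw [Fin.le_def]; exact (show 0 ≤ s by omega))
  have hex : ∃ t : Fin (2*s+1), m t = 0 := by
    by_contra h
    push_neg at h
    have he : (Finset.univ.filter (fun i => m i ≠ 0)) = Finset.univ :=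
      Finset.filter_true_of_mem (fun i _ => h i)
    rw [he, Finset.card_univ, Fintype.card_fin] at hsupp
    omega
  clear hb hm hsupp h2 hpn hq hp hdvd
  -- the chain of congruences mod p
  have chain : ∀ t : ℕ, ∀ h1 : t < 2*s+1, ∀ h1' : t+1 < 2*s+1, t + 1 ≤ 2*s - 1 →
      p ∣ m ⟨t, h1⟩ + m ⟨t+1, h1'⟩ := by
    intro t h1 h1' ht
    rcases Nat.even_or_odd t with ⟨c, hcc⟩ | ⟨j, hj⟩
    · have hcs : c < s := by omega
      have hd := (pdvd ⟨c, by omega⟩).trans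
        (zz_hE s p hs n m hcoord c hcs (by omega) (by omega) (by omega))
      have e1 : (⟨t, h1⟩ : Fin (2*s+1)) = ⟨2*c, by omega⟩ := by
        apply Fin.ext; simp only; omega
      have e2 : (⟨t+1, h1'⟩ : Fin (2*s+1)) = ⟨2*c+1, by omega⟩ := by
        apply Fin.ext; simp only; omega
      rw [e1, e2]; exact hd
    · have hj1 : 1 ≤ j + 1 := by omega
      have hjs : j + 1 < s := by omega
      have hd := (pdvd ⟨s+(j+1), by omega⟩).trans
        (zz_hF s p hs n m hcoord (j+1) hj1 hjs (by omega) (by omega) (by omega))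
      have e1 : (⟨t, h1⟩ : Fin (2*s+1)) = ⟨2*(j+1)-1, by omega⟩ := by
        apply Fin.ext; simp only; omega
      have e2 : (⟨t+1, h1'⟩ : Fin (2*s+1)) = ⟨2*(j+1), by omega⟩ := by
        apply Fin.ext; simp only; omega
      rw [e1, e2]; exact hd
  -- propagation along the chain
  have aux : ∀ t : ℕ, ∀ h1 : t < 2*s+1, t ≤ 2*s-1 →
      (p ∣ m ⟨0, h02⟩ ↔ p ∣ m ⟨t, h1⟩) := by
    intro t
    induction t with
    | zero => intro _ _; rfl
    | succ k ih =>
      intro h1 ht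
      have hk := ih (by omega) (by omega)
      have hcc := chain k (by omega) h1 (by omega)
      constructor
      · intro h0
        have hmk := hk.mp h0
        have e : m ⟨k+1, h1⟩
            = (m ⟨k, by omega⟩ + m ⟨k+1, h1⟩) - m ⟨k, by omega⟩ := by omega
        rw [e]; exact Nat.dvd_sub hcc hmk
      · intro hx
        apply hk.mpr
        have e : m ⟨k, by omega⟩
            = (m ⟨k, by omega⟩ + m ⟨k+1, h1⟩) - m ⟨k+1, h1⟩ := by omega
        rw [e]; exact Nat.dvd_sub hcc hx
  obtain ⟨t0, ht0⟩ := hex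
  -- p divides m 0
  have h0 : p ∣ m ⟨0, h02⟩ := by
    rcases Nat.lt_or_ge t0.val (2*s) with h | h
    · apply (aux t0.val t0.isLt (by omega)).mpr
      have e : (⟨t0.val, t0.isLt⟩ : Fin (2*s+1)) = t0 := Fin.ext rfl
      rw [e, ht0]
      exact dvd_zero p
    · have ht0v : t0 = ⟨2*s, h2s2⟩ := Fin.ext (show t0.val = 2*s by omega)
      rw [ht0v] at ht0
      rw [ht0] at hS
      rcases Nat.eq_zero_or_pos q with hq0 | hq0
      · have hN0 : n ⟨s, hs2⟩ = 0 := by rw [hqN, hq0, Nat.mul_zero]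
        have hn0 : n ⟨0, h0s⟩ = 0 := by
          rw [hN0] at hd0
          exact Nat.eq_zero_of_zero_dvd hd0
        have hdd := zz_hE s p hs n m hcoord 0 (by omega) h0s (by omega) (by omega)
        rw [hn0] at hdd
        have hsumz := Nat.eq_zero_of_zero_dvd hdd
        have e : m ⟨0, h02⟩ = 0 := by
          have key0 : m ⟨0, h02⟩ + m ⟨1, by omega⟩ = 0 := hsumz
          omega
        rw [e]
        exact dvd_zero p
      · have hdq : ((p : ℤ) * q) ∣ (m ⟨0, h02⟩ : ℤ) * q := by
          have hneg : (n ⟨s, hs2⟩ : ℤ) ∣ (m ⟨0, h02⟩ : ℤ) * q := by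
            have hd := (dvd_neg).mpr hS
            simpa using hd
          calc ((p : ℤ) * q) = (n ⟨s, hs2⟩ : ℤ) := by exact_mod_cast hqN.symm
            _ ∣ _ := hneg
        have hq0' : (q : ℤ) ≠ 0 := by exact_mod_cast hq0.ne'
        have hfin := (mul_dvd_mul_iff_right hq0').mp hdq
        exact_mod_cast hfin
  -- conclude
  intro i
  rcases Nat.lt_or_ge i.val (2*s) with h | h
  · have e : i = (⟨i.val, i.isLt⟩ : Fin (2*s+1)) := Fin.ext rfl
    rw [e]
    exact (aux i.val i.isLt (by omega)).mp h0
  · have hi : i = ⟨2*s, h2s2⟩ := Fin.ext (show i.val = 2*s by omega)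
    rw [hi]
    obtain ⟨a, ha⟩ := h0
    have hNd : (n ⟨s, hs2⟩ : ℤ) ∣ (m ⟨2*s, h2s2⟩ : ℤ) := by
      have hmul : (m ⟨0, h02⟩ : ℤ) * q = a * (n ⟨s, hs2⟩ : ℤ) := by
        rw [show ((n ⟨s, hs2⟩ : ℕ) : ℤ) = (p : ℤ) * q from by exact_mod_cast hqN]
        push_cast [ha]
        ring
      have hdvd2 : (n ⟨s, hs2⟩ : ℤ) ∣ (m ⟨0, h02⟩ : ℤ) * q := ⟨a, by rw [hmul]; ring⟩
      have h2' := dvd_add hS hdvd2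
      simpa using h2'
    have hpd : (p : ℤ) ∣ (m ⟨2*s, h2s2⟩ : ℤ) :=
      dvd_trans (show (p:ℤ) ∣ (n ⟨s, hs2⟩ : ℤ) from ⟨q, by exact_mod_cast hqN⟩) hNd
    exact_mod_cast hpd
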